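/- Let L(·|θ) be a family of objective functions and M(θ) = argmax_{θ'} L(θ'|θ). Suppose L(·|θ*) is λ-strongly concave on a ball B(r,θ*), the family satisfies first-order stability with constant μ (i.e., ‖∇L(M(θ)|θ*) − ∇L(M(θ)|θ)‖ ≤ μ‖θ−θ*‖ for θ ∈ B(r,θ*)), θ* = M(θ*) (self-consistency), and 0 ≤ μ < λ. Then for all θ ∈ B(r,θ*): ‖M(θ) − θ*‖ ≤ (μ/λ)‖θ − θ*‖. -/
import Mathlib


open scoped RealInnerProductSpace

/-- Population EM contraction: under λ-strong concavity of `L(·|θ*)`,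
first-order stability with constant `μ`, self-consistency `M(θ*) = θ*`,
and first-order optimality of the maximizers `M(θ)`, the operator `M` is
contractive on the ball `B(r,θ*)` with factor `μ/λ`. -/
theorem em_population_contraction
    {d : ℕ}
    (L : EuclideanSpace ℝ (Fin d) → EuclideanSpace ℝ (Fin d) → ℝ)
    (gL : EuclideanSpace ℝ (Fin d) → EuclideanSpace ℝ (Fin d) → EuclideanSpace ℝ (Fin d))
    (M : EuclideanSpace ℝ (Fin d) → EuclideanSpace ℝ (Fin d))
    (θstar : EuclideanSpace ℝ (Fin d)) (r lam mu : ℝ)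
    (hr : 0 < r) (hmu : 0 ≤ mu) (hmulam : mu < lam)
    (hconc : ∀ θ₁ ∈ Metric.closedBall θstar r, ∀ θ₂ ∈ Metric.closedBall θstar r,
        L θ₁ θstar - L θ₂ θstar - ⟪gL θ₂ θstar, θ₁ - θ₂⟫
          ≤ -(lam / 2) * ‖θ₁ - θ₂‖ ^ 2)
    (hstab : ∀ θ ∈ Metric.closedBall θstar r,
        ‖gL (M θ) θstar - gL (M θ) θ‖ ≤ mu * ‖θ - θstar‖)
    (hself : M θstar = θstar)
    (hopt : ∀ θ θ' : EuclideanSpace ℝ (Fin d), ⟪gL (M θ) θ, θ' - M θ⟫ ≤ 0)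
    (hMball : ∀ θ ∈ Metric.closedBall θstar r, M θ ∈ Metric.closedBall θstar r) :
    ∀ θ ∈ Metric.closedBall θstar r,
      ‖M θ - θstar‖ ≤ (mu / lam) * ‖θ - θstar‖ := by
  intro θ hθ
  have hlam : 0 < lam := lt_of_le_of_lt hmu hmulam
  have hMθ := hMball θ hθ
  have hstar : θstar ∈ Metric.closedBall θstar r := Metric.mem_closedBall_self hr.le
  -- strong monotonicity of -gL(·,θstar)
  have h1 := hconc (M θ) hMθ θstar hstar
  have h2 := hconc θstar hstar (M θ) hMθ
  have hsum : ⟪gL (M θ) θstar - gL θstar θstar, M θ - θstar⟫ ≤ -lam * ‖M θ - θstar‖ ^ 2 := by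
    have hnorm : ‖θstar - M θ‖ = ‖M θ - θstar‖ := norm_sub_rev _ _
    have hin : ⟪gL (M θ) θstar, θstar - M θ⟫ = -⟪gL (M θ) θstar, M θ - θstar⟫ := by
      rw [← inner_neg_right]; congr 1; abel
    have hs : ⟪gL (M θ) θstar - gL θstar θstar, M θ - θstar⟫
        = ⟪gL (M θ) θstar, M θ - θstar⟫ - ⟪gL θstar θstar, M θ - θstar⟫ :=
      inner_sub_left _ _ _
    rw [hs]; rw [hin, hnorm] at h2; linarith
  -- optimality at θstar
  have hopt1 : ⟪gL θstar θstar, M θ - θstar⟫ ≤ 0 := by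
    have := hopt θstar (M θ); rwa [hself] at this
  -- optimality at θ
  have hopt2 : 0 ≤ ⟪gL (M θ) θ, M θ - θstar⟫ := by
    have := hopt θ θstar
    have hin : ⟪gL (M θ) θ, θstar - M θ⟫ = -⟪gL (M θ) θ, M θ - θstar⟫ := by
      rw [← inner_neg_right]; congr 1; abel
    linarith [hin ▸ this]
  -- combine
  have key : lam * ‖M θ - θstar‖ ^ 2 ≤ ⟪gL (M θ) θ - gL (M θ) θstar, M θ - θstar⟫ := by
    have hs : ⟪gL (M θ) θstar - gL θstar θstar, M θ - θstar⟫
        = ⟪gL (M θ) θstar, M θ - θstar⟫ - ⟪gL θstar θstar, M θ - θstar⟫ :=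
      inner_sub_left _ _ _
    have ht : ⟪gL (M θ) θ - gL (M θ) θstar, M θ - θstar⟫
        = ⟪gL (M θ) θ, M θ - θstar⟫ - ⟪gL (M θ) θstar, M θ - θstar⟫ :=
      inner_sub_left _ _ _
    nlinarith [hsum, hopt1, hopt2]
  have hcauchy : ⟪gL (M θ) θ - gL (M θ) θstar, M θ - θstar⟫
      ≤ ‖gL (M θ) θstar - gL (M θ) θ‖ * ‖M θ - θstar‖ := by
    calc ⟪gL (M θ) θ - gL (M θ) θstar, M θ - θstar⟫
        ≤ ‖gL (M θ) θ - gL (M θ) θstar‖ * ‖M θ - θstar‖ := real_inner_le_norm _ _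
      _ = ‖gL (M θ) θstar - gL (M θ) θ‖ * ‖M θ - θstar‖ := by rw [norm_sub_rev]
  have hμ := hstab θ hθ
  have hbound : lam * ‖M θ - θstar‖ ^ 2 ≤ mu * ‖θ - θstar‖ * ‖M θ - θstar‖ := by
    nlinarith [norm_nonneg (M θ - θstar), key, hcauchy, hμ]
  rcases eq_or_lt_of_le (norm_nonneg (M θ - θstar)) with h0 | h0
  · rw [← h0]
    positivity
  · rw [div_mul_eq_mul_div, le_div_iff₀ hlam]
    nlinarith [hbound]
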